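/- T∅_L has quantifier elimination: for every L-formula φ(x̄) there is a quantifier-free L-formula ψ(x̄) in the same free variables such that every model M of T∅_L satisfies ∀x̄ (φ(x̄) ↔ ψ(x̄)). -/

import Mathlib

open FirstOrder FirstOrder.Language

universe u v w

/-- A flat formula in the variables `V`: either `R(z̄)` (`pos = true`), `¬ R(z̄)`
(`pos = false`), or `f(z̄) = z'`.  Constant symbols are `0`-ary function symbols. -/
inductive FlatFormula (L : FirstOrder.Language.{v, w}) (V : Type u) where
  | rel {n : ℕ} (R : L.Relations n) (z : Fin n → V) (pos : Bool) : FlatFormula L V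
  | func {n : ℕ} (f : L.Functions n) (z : Fin n → V) (z' : V) : FlatFormula L V

/-- Realization of a flat formula in an `L`-structure `M` under an assignment `v : V → M`. -/
def FlatFormula.Realize {L : FirstOrder.Language.{v, w}} {V : Type u} {M : Type*}
    [L.Structure M] (v : V → M) : FlatFormula L V → Prop
  | .rel R z pos => (Structure.RelMap R (fun i => v (z i)) ↔ pos = true)
  | .func f z z' => Structure.funMap f (fun i => v (z i)) = v z'

/-- A flat diagram (a set of flat formulas) is consistent if no relation instance occurs both
positively and negatively, and each function symbol is assigned at most one value on each
tuple of variables. -/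
def FlatConsistent {L : FirstOrder.Language.{v, w}} {V : Type u}
    (Δ : Set (FlatFormula L V)) : Prop :=
  (∀ {n : ℕ} (R : L.Relations n) (z : Fin n → V),
      ¬ (FlatFormula.rel R z true ∈ Δ ∧ FlatFormula.rel R z false ∈ Δ)) ∧
  (∀ {n : ℕ} (f : L.Functions n) (z : Fin n → V) (z₁ z₂ : V),
      FlatFormula.func f z z₁ ∈ Δ → FlatFormula.func f z z₂ ∈ Δ → z₁ = z₂)

/-- A flat formula mentions a variable on the right of `α ⊕ β` (i.e. among the `ȳ`)
in its argument tuple. -/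
def FlatFormula.MentionsRight {L : FirstOrder.Language.{v, w}} {α β : Type u} :
    FlatFormula L (α ⊕ β) → Prop
  | .rel _ z _ => ∃ i, (z i).isRight
  | .func _ z _ => ∃ i, (z i).isRight

/-- An extension diagram in `(x̄, ȳ)` (with `x̄` indexed by `Fin m` and `ȳ` by `Fin n`):
a finite consistent flat diagram each of whose formulas mentions a variable among the `ȳ`. -/
def IsExtensionDiagram {L : FirstOrder.Language.{v, w}} {m n : ℕ}
    (Δ : Set (FlatFormula L (Fin m ⊕ Fin n))) : Prop :=
  Δ.Finite ∧ FlatConsistent Δ ∧ ∀ φ ∈ Δ, φ.MentionsRight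

/-- `M ⊨ φ_Δ(ā, b̄)`: all formulas of `Δ` hold under the assignment `Sum.elim a b`, and the
combined tuple `ā b̄` is non-redundant (its entries are pairwise distinct). -/
def RealizesExtDiagram {L : FirstOrder.Language.{v, w}} {m n : ℕ} {M : Type*} [L.Structure M]
    (Δ : Set (FlatFormula L (Fin m ⊕ Fin n))) (a : Fin m → M) (b : Fin n → M) : Prop :=
  (∀ φ ∈ Δ, FlatFormula.Realize (Sum.elim a b) φ) ∧ Function.Injective (Sum.elim a b)

/-- `M` is a model of `T^∅_L`: `M` satisfies the sentence
`ψ_Δ = ∀ x̄ (δ(x̄) → ∃ ȳ φ_Δ(x̄, ȳ))` for every extension diagram `Δ`. -/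
def ModelsTEmpty (L : FirstOrder.Language.{v, w}) (M : Type*) [L.Structure M] : Prop :=
  ∀ (m n : ℕ) (Δ : Set (FlatFormula L (Fin m ⊕ Fin n))), IsExtensionDiagram Δ →
    ∀ a : Fin m → M, Function.Injective a → ∃ b : Fin n → M, RealizesExtDiagram Δ a b

/-- An `L`-structure `A` is existentially closed if every existential quantifier-free
statement with parameters in `A` which holds in some extension of `A` already holds in `A`. -/
def IsExistentiallyClosed (L : FirstOrder.Language.{v, w}) (A : Type u) [L.Structure A] :
    Prop :=
  ∀ (B : Type (max u v w)) [L.Structure B] (g : A ↪[L] B)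
    (m n : ℕ) (φ : L.Formula (Fin m ⊕ Fin n)), φ.IsQF →
      ∀ a : Fin m → A,
        (∃ b : Fin n → B, φ.Realize (Sum.elim (fun i => g (a i)) b)) →
        ∃ b : Fin n → A, φ.Realize (Sum.elim a b)

/-- A bundled `L`-structure (used to quantify existentially over `L`-structures). -/
structure BStructure (L : FirstOrder.Language.{v, w}) : Type (max (u + 1) v w) where
  carrier : Type u
  [struc : L.Structure carrier]

attribute [instance] BStructure.struc

instance {L : FirstOrder.Language.{v, w}} : CoeSort (BStructure.{u} L) (Type u) :=
  ⟨BStructure.carrier⟩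

/-- All variables occurring in a flat formula lie in the set `S`. -/
def FlatFormula.VarsIn {L : FirstOrder.Language.{v, w}} {V : Type u} (S : Set V) :
    FlatFormula L V → Prop
  | .rel _ z _ => ∀ i, z i ∈ S
  | .func _ z z' => (∀ i, z i ∈ S) ∧ z' ∈ S

/-- `Δ` is a complete consistent flat diagram in the variables `S`. -/
def FlatCompleteOn {L : FirstOrder.Language.{v, w}} {V : Type u} (S : Set V)
    (Δ : Set (FlatFormula L V)) : Prop :=
  FlatConsistent Δ ∧ (∀ φ ∈ Δ, FlatFormula.VarsIn S φ) ∧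
  (∀ {n : ℕ} (R : L.Relations n) (z : Fin n → V), (∀ i, z i ∈ S) →
      (FlatFormula.rel R z true ∈ Δ ∨ FlatFormula.rel R z false ∈ Δ)) ∧
  (∀ {n : ℕ} (f : L.Functions n) (z : Fin n → V), (∀ i, z i ∈ S) →
      ∃ z' ∈ S, FlatFormula.func f z z' ∈ Δ)


namespace TEQE

open FirstOrder.Language.BoundedFormula

variable {L : FirstOrder.Language.{v, w}} {α : Type*} {n : ℕ}

/-- A literal: an atomic bounded formula together with a sign. -/
abbrev Lit (L : FirstOrder.Language.{v, w}) (α : Type*) (n : ℕ) :=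
  L.BoundedFormula α n × Bool

def LitRealize {M : Type*} [L.Structure M] (v : α → M) (xs : Fin n → M)
    (l : Lit L α n) : Prop :=
  l.1.Realize v xs ↔ l.2 = true

def ClauseRealize {M : Type*} [L.Structure M] (v : α → M) (xs : Fin n → M)
    (C : List (Lit L α n)) : Prop :=
  ∀ l ∈ C, LitRealize v xs l

/-- Disjunctive normal form data: `.1` is a DNF of `φ`, `.2` a DNF of `¬φ` (for `φ` q.f.). -/
def dnfp : ∀ {n : ℕ}, L.BoundedFormula α n → List (List (Lit L α n)) × List (List (Lit L α n))
  | _, BoundedFormula.falsum => ([], [ [] ])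
  | _, BoundedFormula.equal t₁ t₂ =>
      ([ [(BoundedFormula.equal t₁ t₂, true)] ], [ [(BoundedFormula.equal t₁ t₂, false)] ])
  | _, BoundedFormula.rel R ts =>
      ([ [(BoundedFormula.rel R ts, true)] ], [ [(BoundedFormula.rel R ts, false)] ])
  | _, BoundedFormula.imp f₁ f₂ =>
      ((dnfp f₁).2 ++ (dnfp f₂).1,
        (dnfp f₁).1.flatMap fun C₁ => (dnfp f₂).2.map fun C₂ => C₁ ++ C₂)
  | _, BoundedFormula.all _ => ([], [])

theorem dnfp_atomic : ∀ {n : ℕ} (φ : L.BoundedFormula α n),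
    (∀ C ∈ (dnfp φ).1, ∀ l ∈ C, BoundedFormula.IsAtomic l.1) ∧
    (∀ C ∈ (dnfp φ).2, ∀ l ∈ C, BoundedFormula.IsAtomic l.1) := by
  intro n φ
  induction φ with
  | falsum =>
      refine ⟨by simp [dnfp], ?_⟩
      intro C hC l hl
      simp only [dnfp, List.mem_singleton] at hC
      subst hC
      simp at hl
  | equal t₁ t₂ =>
      constructor <;>
        · intro C hC l hl
          simp only [dnfp, List.mem_singleton] at hC
          subst hC
          simp only [List.mem_singleton] at hl
          subst hl
          exact IsAtomic.equal t₁ t₂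
  | rel R ts =>
      constructor <;>
        · intro C hC l hl
          simp only [dnfp, List.mem_singleton] at hC
          subst hC
          simp only [List.mem_singleton] at hl
          subst hl
          exact IsAtomic.rel R ts
  | imp f₁ f₂ ih₁ ih₂ =>
      constructor
      · intro C hC l hl
        simp only [dnfp, List.mem_append] at hC
        rcases hC with h | h
        · exact ih₁.2 C h l hl
        · exact ih₂.1 C h l hl
      · intro C hC l hl
        simp only [dnfp, List.mem_flatMap, List.mem_map] at hC
        obtain ⟨C₁, h₁, C₂, h₂, rfl⟩ := hC
        rcases List.mem_append.mp hl with h | h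
        · exact ih₁.1 C₁ h₁ l h
        · exact ih₂.2 C₂ h₂ l h
  | all f ih => exact ⟨by simp [dnfp], by simp [dnfp]⟩

theorem dnfp_correct {M : Type*} [L.Structure M] :
    ∀ {n : ℕ} (φ : L.BoundedFormula α n), φ.IsQF → ∀ (v : α → M) (xs : Fin n → M),
    (φ.Realize v xs ↔ ∃ C ∈ (dnfp φ).1, ClauseRealize v xs C) ∧
    (¬ φ.Realize v xs ↔ ∃ C ∈ (dnfp φ).2, ClauseRealize v xs C) := by
  intro n φ hφ
  induction φ with
  | falsum =>
      intro v xs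
      constructor
      · simp [dnfp, BoundedFormula.Realize]
      · simp only [dnfp, BoundedFormula.realize_bot]
        constructor
        · intro _
          exact ⟨[], by simp, by intro l hl; simp at hl⟩
        · intro _
          exact not_false
  | equal t₁ t₂ =>
      intro v xs
      constructor
      · constructor
        · intro h
          refine ⟨[(BoundedFormula.equal t₁ t₂, true)], by simp [dnfp], ?_⟩
          intro l hl
          simp only [List.mem_singleton] at hl
          subst hl
          simp [LitRealize, h]
        · rintro ⟨C, hC, hcl⟩
          simp only [dnfp, List.mem_singleton] at hC
          subst hC
          have := hcl _ (List.mem_singleton_self _)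
          rw [LitRealize] at this
          exact this.mpr rfl
      · constructor
        · intro h
          refine ⟨[(BoundedFormula.equal t₁ t₂, false)], by simp [dnfp], ?_⟩
          intro l hl
          simp only [List.mem_singleton] at hl
          subst hl
          simpa [LitRealize] using h
        · rintro ⟨C, hC, hcl⟩
          simp only [dnfp, List.mem_singleton] at hC
          subst hC
          have := hcl _ (List.mem_singleton_self _)
          rw [LitRealize] at this
          simp only [Bool.false_eq_true, iff_false] at this
          exact this
  | rel R ts =>
      intro v xs
      constructor
      · constructor
        · intro h
          refine ⟨[(BoundedFormula.rel R ts, true)], by simp [dnfp], ?_⟩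
          intro l hl
          simp only [List.mem_singleton] at hl
          subst hl
          simp [LitRealize, h]
        · rintro ⟨C, hC, hcl⟩
          simp only [dnfp, List.mem_singleton] at hC
          subst hC
          have := hcl _ (List.mem_singleton_self _)
          rw [LitRealize] at this
          exact this.mpr rfl
      · constructor
        · intro h
          refine ⟨[(BoundedFormula.rel R ts, false)], by simp [dnfp], ?_⟩
          intro l hl
          simp only [List.mem_singleton] at hl
          subst hl
          simpa [LitRealize] using h
        · rintro ⟨C, hC, hcl⟩
          simp only [dnfp, List.mem_singleton] at hC
          subst hC
          have := hcl _ (List.mem_singleton_self _)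
          rw [LitRealize] at this
          simp only [Bool.false_eq_true, iff_false] at this
          exact this
  | imp f₁ f₂ ih₁ ih₂ =>
      have hq₁ : f₁.IsQF := by
        cases hφ with
        | of_isAtomic h => cases h
        | imp h₁ h₂ => exact h₁
      have hq₂ : f₂.IsQF := by
        cases hφ with
        | of_isAtomic h => cases h
        | imp h₁ h₂ => exact h₂
      intro v xs
      have H₁ := ih₁ hq₁ v xs
      have H₂ := ih₂ hq₂ v xs
      constructor
      · rw [BoundedFormula.realize_imp]
        constructor
        · intro h
          by_cases h₁ : f₁.Realize v xs
          · obtain ⟨C, hC, hcl⟩ := H₂.1.mp (h h₁)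
            exact ⟨C, by simp [dnfp, hC], hcl⟩
          · obtain ⟨C, hC, hcl⟩ := H₁.2.mp h₁
            exact ⟨C, by simp [dnfp, hC], hcl⟩
        · rintro ⟨C, hC, hcl⟩ h₁
          simp only [dnfp, List.mem_append] at hC
          rcases hC with h | h
          · exact absurd h₁ (H₁.2.mpr ⟨C, h, hcl⟩)
          · exact H₂.1.mpr ⟨C, h, hcl⟩
      · rw [BoundedFormula.realize_imp]
        constructor
        · intro h
          push_neg at h
          obtain ⟨C₁, hC₁, hcl₁⟩ := H₁.1.mp h.1
          obtain ⟨C₂, hC₂, hcl₂⟩ := H₂.2.mp h.2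
          refine ⟨C₁ ++ C₂, ?_, ?_⟩
          · simp only [dnfp, List.mem_flatMap, List.mem_map]
            exact ⟨C₁, hC₁, C₂, hC₂, rfl⟩
          · intro l hl
            rcases List.mem_append.mp hl with h | h
            · exact hcl₁ l h
            · exact hcl₂ l h
        · rintro ⟨C, hC, hcl⟩ h
          simp only [dnfp, List.mem_flatMap, List.mem_map] at hC
          obtain ⟨C₁, h₁, C₂, h₂, rfl⟩ := hC
          have hf₁ : f₁.Realize v xs := H₁.1.mpr ⟨C₁, h₁, fun l hl => hcl l (by simp [hl])⟩
          have hf₂ : ¬ f₂.Realize v xs := H₂.2.mpr ⟨C₂, h₂, fun l hl => hcl l (by simp [hl])⟩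
          exact hf₂ (h hf₁)
  | all f ih =>
      exfalso
      cases hφ with
      | of_isAtomic h => cases h


/-! ### Subterms -/

section Subterms

variable {β : Type*}

/-- The list of all subterms of a term (including itself). -/
def subtermList : L.Term β → List (L.Term β)
  | Term.var x => [Term.var x]
  | Term.func f ts => Term.func f ts :: (List.finRange _).flatMap fun i => subtermList (ts i)

theorem self_mem_subtermList (t : L.Term β) : t ∈ subtermList t := by
  cases t with
  | var x => simp [subtermList]
  | func f ts => simp [subtermList]

theorem subtermList_args {m : ℕ} (f : L.Functions m) (ts : Fin m → L.Term β) (i : Fin m) :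
    ∀ s ∈ subtermList (ts i), s ∈ subtermList (Term.func f ts) := by
  intro s hs
  simp only [subtermList, List.mem_cons, List.mem_flatMap]
  exact Or.inr ⟨i, List.mem_finRange i, hs⟩

/-- subterm lists are closed under taking arguments. -/
theorem subtermList_closed (t : L.Term β) :
    ∀ s ∈ subtermList t, ∀ {m : ℕ} (f : L.Functions m) (ts : Fin m → L.Term β),
      s = Term.func f ts → ∀ i, ts i ∈ subtermList t := by
  induction t with
  | var x =>
      intro s hs m f ts heq i
      simp only [subtermList, List.mem_singleton] at hs
      subst hs
      exact absurd heq (by simp)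
  | func g us ih =>
      intro s hs m f ts huq i
      simp only [subtermList, List.mem_cons, List.mem_flatMap] at hs
      rcases hs with rfl | ⟨j, _, hj⟩
      · injection huq with h1 h2 h3
        subst h1
        obtain rfl := eq_of_heq h3
        exact subtermList_args g us i _ (self_mem_subtermList _)
      · exact subtermList_args g us j _ (ih j s hj f ts huq i)


/-- Size of a term, for induction. -/
def tsize : L.Term β → ℕ
  | Term.var _ => 0
  | Term.func _ ts => (Finset.univ.sup fun i => tsize (ts i)) + 1

theorem tsize_args {m : ℕ} (f : L.Functions m) (ts : Fin m → L.Term β) (l : Fin m) :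
    tsize (ts l) < tsize (Term.func f ts) :=
  Nat.lt_succ_of_le (Finset.le_sup (f := fun i => tsize (ts i)) (Finset.mem_univ l))

end Subterms


/-! ### The core construction -/

section Core

variable {k n : ℕ}

/-- Inclusion of the "old" variables into the extended context. -/
def ιv (k n : ℕ) : (Fin k ⊕ Fin n) → (Fin k ⊕ Fin (n + 1)) := Sum.map id Fin.castSucc

theorem ιv_injective (k n : ℕ) : Function.Injective (ιv k n) :=
  Sum.map_injective.mpr ⟨fun _ _ h => h, Fin.castSucc_injective n⟩

/-- The last variable, to be existentially quantified. -/
def yvar (k n : ℕ) : Fin k ⊕ Fin (n + 1) := Sum.inr (Fin.last n)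

theorem realize_ιv {M : Type*} (v : Fin k → M) (xs : Fin n → M) (a : M)
    (z : Fin k ⊕ Fin n) :
    Sum.elim v (Fin.snoc xs a) (ιv k n z) = Sum.elim v xs z := by
  cases z with
  | inl x => rfl
  | inr j => simp [ιv, Fin.snoc_castSucc]

/-- The terms occurring in a literal. -/
def litTerms : Lit L (Fin k) (n + 1) → List (L.Term (Fin k ⊕ Fin (n + 1)))
  | (BoundedFormula.equal t₁ t₂, _) => [t₁, t₂]
  | (BoundedFormula.rel _ ts, _) => (List.finRange _).map ts
  | _ => []

variable (C : List (Lit L (Fin k) (n + 1)))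

/-- All subterms of all terms occurring in the clause `C`, together with the last variable. -/
def TS : List (L.Term (Fin k ⊕ Fin (n + 1))) :=
  Term.var (yvar k n) :: (C.flatMap litTerms).flatMap subtermList

def NN : ℕ := (TS C).length

def S (i : Fin (NN C)) : L.Term (Fin k ⊕ Fin (n + 1)) := (TS C).get i

theorem exists_S_eq {t : L.Term (Fin k ⊕ Fin (n + 1))} (h : t ∈ TS C) : ∃ i, S C i = t := by
  obtain ⟨i, hi⟩ := List.mem_iff_get.mp h
  exact ⟨i, hi⟩

def iy : Fin (NN C) := ⟨0, by simp [NN, TS]⟩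

theorem S_iy : S C (iy C) = Term.var (yvar k n) := rfl

theorem S_mem (i : Fin (NN C)) : S C i ∈ TS C := by
  rw [S]
  exact (TS C).get_mem _

theorem S_closed (i : Fin (NN C)) {m : ℕ} (f : L.Functions m)
    (ts : Fin m → L.Term (Fin k ⊕ Fin (n + 1))) (hS : S C i = Term.func f ts) (l : Fin m) :
    ∃ j, S C j = ts l := by
  apply exists_S_eq
  have hmem : S C i ∈ TS C := S_mem C i
  rw [TS, List.mem_cons] at hmem
  rcases hmem with h | h
  · rw [hS] at h; exact absurd h (by simp)
  · rw [List.mem_flatMap] at h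
    obtain ⟨t₀, ht₀, hsub⟩ := h
    have : ts l ∈ subtermList t₀ := subtermList_closed t₀ _ hsub f ts hS l
    rw [TS, List.mem_cons]
    exact Or.inr (List.mem_flatMap.mpr ⟨t₀, ht₀, this⟩)

theorem litTerms_mem {lit : Lit L (Fin k) (n + 1)} (hlit : lit ∈ C)
    {t : L.Term (Fin k ⊕ Fin (n + 1))} (ht : t ∈ litTerms lit) : ∃ j, S C j = t := by
  apply exists_S_eq
  rw [TS, List.mem_cons]
  exact Or.inr (List.mem_flatMap.mpr ⟨t, List.mem_flatMap.mpr ⟨lit, hlit, ht⟩,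
    self_mem_subtermList t⟩)

variable (r : Fin (NN C) → Fin (NN C))

/-- An index is determined if some index of its class is an old variable, or a function
applied to determined subterms. -/
inductive IsDet : Fin (NN C) → Prop
  | var (i j : Fin (NN C)) (z : Fin k ⊕ Fin n) : r j = r i → S C j = Term.var (ιv k n z) →
      IsDet i
  | fn (i j : Fin (NN C)) {m : ℕ} (f : L.Functions m)
      (ts : Fin m → L.Term (Fin k ⊕ Fin (n + 1))) (js : Fin m → Fin (NN C)) :
      r j = r i → S C j = Term.func f ts → (∀ l, S C (js l) = ts l) → (∀ l, IsDet (js l)) →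
      IsDet i

/-- `u` is a term over the old variables representing the class of `i`. -/
inductive GoodRep : Fin (NN C) → L.Term (Fin k ⊕ Fin n) → Prop
  | var (i j : Fin (NN C)) (z : Fin k ⊕ Fin n) : r j = r i → S C j = Term.var (ιv k n z) →
      GoodRep i (Term.var z)
  | fn (i j : Fin (NN C)) {m : ℕ} (f : L.Functions m)
      (ts : Fin m → L.Term (Fin k ⊕ Fin (n + 1))) (js : Fin m → Fin (NN C))
      (us : Fin m → L.Term (Fin k ⊕ Fin n)) :
      r j = r i → S C j = Term.func f ts → (∀ l, S C (js l) = ts l) →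
      (∀ l, GoodRep (js l) (us l)) → GoodRep i (Term.func f us)

theorem IsDet.toGoodRep {i : Fin (NN C)} (h : IsDet C r i) : ∃ u, GoodRep C r i u := by
  induction h with
  | var i j z hji hS => exact ⟨Term.var z, GoodRep.var i j z hji hS⟩
  | fn i j f ts js hji hS hjs _ ih =>
      exact ⟨Term.func f fun l => (ih l).choose,
        GoodRep.fn i j f ts js _ hji hS hjs fun l => (ih l).choose_spec⟩

theorem IsDet.congr {i j : Fin (NN C)} (h : IsDet C r i) (hij : r i = r j) : IsDet C r j := by
  cases h with
  | var i j₀ z hji hS => exact IsDet.var j j₀ z (hji.trans hij) hS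
  | fn i j₀ f ts js hji hS hjs hdet => exact IsDet.fn j j₀ f ts js (hji.trans hij) hS hjs hdet

noncomputable def U (c : Fin (NN C)) (h : IsDet C r c) : L.Term (Fin k ⊕ Fin n) :=
  (IsDet.toGoodRep C r h).choose

theorem U_good (c : Fin (NN C)) (h : IsDet C r c) : GoodRep C r c (U C r c h) :=
  (IsDet.toGoodRep C r h).choose_spec

open Classical in
noncomputable def classIdx (t : L.Term (Fin k ⊕ Fin (n + 1))) : Fin (NN C) :=
  if h : ∃ j, S C j = t then h.choose else iy C

theorem classIdx_spec {t : L.Term (Fin k ⊕ Fin (n + 1))} (h : ∃ j, S C j = t) :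
    S C (classIdx C t) = t := by
  rw [classIdx, dif_pos h]
  exact h.choose_spec


/-! ### Pattern validity and the eliminated formula -/

def Valid : Prop :=
  (∀ i, r (r i) = r i) ∧
  (∀ i j, S C i = S C j → r i = r j) ∧
  (∀ (i j : Fin (NN C)) {m : ℕ} (f : L.Functions m)
      (ts ts' : Fin m → L.Term (Fin k ⊕ Fin (n + 1))),
      S C i = Term.func f ts → S C j = Term.func f ts' →
      (∀ l (j₁ j₂ : Fin (NN C)), S C j₁ = ts l → S C j₂ = ts' l → r j₁ = r j₂) → r i = r j) ∧
  (∀ {m : ℕ} (R : L.Relations m) (ts ts' : Fin m → L.Term (Fin k ⊕ Fin (n + 1))) (b b' : Bool),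
      (BoundedFormula.rel R ts, b) ∈ C → (BoundedFormula.rel R ts', b') ∈ C →
      (∀ l (j₁ j₂ : Fin (NN C)), S C j₁ = ts l → S C j₂ = ts' l → r j₁ = r j₂) → b = b') ∧
  (∀ (t u : L.Term (Fin k ⊕ Fin (n + 1))) (b : Bool) (j₁ j₂ : Fin (NN C)),
      (BoundedFormula.equal t u, b) ∈ C → S C j₁ = t → S C j₂ = u → (r j₁ = r j₂ ↔ b = true))

open Classical in
noncomputable def conj1 (i j : Fin (NN C)) : L.BoundedFormula (Fin k) n :=
  if hi : IsDet C r (r i) then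
    if hj : IsDet C r (r j) then
      if r i = r j then ⊤
      else (Term.bdEqual (U C r (r i) hi) (U C r (r j) hj)).not
    else ⊤
  else ⊤

open Classical in
noncomputable def conj2' (c : Fin (NN C)) :
    L.Term (Fin k ⊕ Fin (n + 1)) → L.BoundedFormula (Fin k) n
  | Term.var (Sum.inl x) =>
      if hd : IsDet C r c then Term.bdEqual (Term.var (Sum.inl x)) (U C r c hd) else ⊤
  | Term.var (Sum.inr j) =>
      if hj : j = Fin.last n then ⊤
      else if hd : IsDet C r c then
        Term.bdEqual (Term.var (Sum.inr (j.castPred hj))) (U C r c hd)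
      else ⊤
  | Term.func _ _ => ⊤

noncomputable def conj2 (i : Fin (NN C)) : L.BoundedFormula (Fin k) n :=
  conj2' C r (r i) (S C i)

open Classical in
noncomputable def conj3' (c : Fin (NN C)) :
    L.Term (Fin k ⊕ Fin (n + 1)) → L.BoundedFormula (Fin k) n
  | Term.func f ts =>
      if hd : (∀ l, IsDet C r (r (classIdx C (ts l)))) ∧ IsDet C r c then
        Term.bdEqual (Term.func f fun l => U C r (r (classIdx C (ts l))) (hd.1 l))
          (U C r c hd.2)
      else ⊤
  | Term.var _ => ⊤

noncomputable def conj3 (i : Fin (NN C)) : L.BoundedFormula (Fin k) n :=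
  conj3' C r (r i) (S C i)

open Classical in
noncomputable def conj4 : Lit L (Fin k) (n + 1) → L.BoundedFormula (Fin k) n
  | (BoundedFormula.rel R ts, b) =>
      if hd : ∀ l, IsDet C r (r (classIdx C (ts l))) then
        if b then Relations.boundedFormula R fun l => U C r (r (classIdx C (ts l))) (hd l)
        else (Relations.boundedFormula R fun l => U C r (r (classIdx C (ts l))) (hd l)).not
      else ⊤
  | _ => ⊤

noncomputable def conjList : List (L.BoundedFormula (Fin k) n) :=
  ((List.finRange (NN C)).flatMap fun i => (List.finRange (NN C)).map fun j => conj1 C r i j)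
    ++ (List.finRange (NN C)).map (conj2 C r)
    ++ (List.finRange (NN C)).map (conj3 C r)
    ++ C.map (conj4 C r)

open Classical in
noncomputable def theta : L.BoundedFormula (Fin k) n :=
  if Valid C r then (conjList C r).foldr (· ⊓ ·) ⊤ else ⊥

end Core

section Fold

variable {α : Type*} {n : ℕ}

theorem isQF_foldr_inf (l : List (L.BoundedFormula α n)) (h : ∀ φ ∈ l, φ.IsQF) :
    (l.foldr (· ⊓ ·) ⊤).IsQF := by
  induction l with
  | nil => exact BoundedFormula.IsQF.top
  | cons φ l ih =>
      exact BoundedFormula.IsQF.inf (h φ (by simp)) (ih fun ψ hψ => h ψ (by simp [hψ]))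

theorem isQF_foldr_sup (l : List (L.BoundedFormula α n)) (h : ∀ φ ∈ l, φ.IsQF) :
    (l.foldr (· ⊔ ·) ⊥).IsQF := by
  induction l with
  | nil => exact BoundedFormula.isQF_bot
  | cons φ l ih =>
      exact BoundedFormula.IsQF.sup (h φ (by simp)) (ih fun ψ hψ => h ψ (by simp [hψ]))

end Fold

section Core2

variable {k n : ℕ} (C : List (Lit L (Fin k) (n + 1))) (r : Fin (NN C) → Fin (NN C))

noncomputable def bigTheta : L.BoundedFormula (Fin k) n :=
  (((Finset.univ : Finset (Fin (NN C) → Fin (NN C))).toList).map (theta C)).foldr (· ⊔ ·) ⊥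

theorem conj1_isQF (i j : Fin (NN C)) : (conj1 C r i j).IsQF := by
  rw [conj1]
  split
  · split
    · split
      · exact BoundedFormula.IsQF.top
      · exact (BoundedFormula.IsAtomic.equal _ _).isQF.not
    · exact BoundedFormula.IsQF.top
  · exact BoundedFormula.IsQF.top

theorem conj2'_isQF (c : Fin (NN C)) (t : L.Term (Fin k ⊕ Fin (n + 1))) :
    (conj2' C r c t).IsQF := by
  match t with
  | Term.var (Sum.inl x) =>
      rw [conj2']
      split
      · exact (BoundedFormula.IsAtomic.equal _ _).isQF
      · exact BoundedFormula.IsQF.top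
  | Term.var (Sum.inr j) =>
      rw [conj2']
      split
      · exact BoundedFormula.IsQF.top
      · split
        · exact (BoundedFormula.IsAtomic.equal _ _).isQF
        · exact BoundedFormula.IsQF.top
  | Term.func f ts => rw [conj2']; exact BoundedFormula.IsQF.top

theorem conj3'_isQF (c : Fin (NN C)) (t : L.Term (Fin k ⊕ Fin (n + 1))) :
    (conj3' C r c t).IsQF := by
  match t with
  | Term.var z => rw [conj3']; exact BoundedFormula.IsQF.top
  | Term.func f ts =>
      rw [conj3']
      split
      · exact (BoundedFormula.IsAtomic.equal _ _).isQF
      · exact BoundedFormula.IsQF.top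

theorem conj4_isQF (lit : Lit L (Fin k) (n + 1)) : (conj4 C r lit).IsQF := by
  match lit with
  | (BoundedFormula.rel R ts, b) =>
      rw [conj4]
      split
      · split
        · exact (BoundedFormula.IsAtomic.rel _ _).isQF
        · exact (BoundedFormula.IsAtomic.rel _ _).isQF.not
      · exact BoundedFormula.IsQF.top
  | (BoundedFormula.falsum, b) => exact BoundedFormula.IsQF.top
  | (BoundedFormula.equal t₁ t₂, b) => exact BoundedFormula.IsQF.top
  | (BoundedFormula.imp f₁ f₂, b) => exact BoundedFormula.IsQF.top
  | (BoundedFormula.all f, b) => exact BoundedFormula.IsQF.top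

theorem theta_isQF : (theta C r).IsQF := by
  rw [theta]
  split
  · apply isQF_foldr_inf
    intro φ hφ
    rw [conjList] at hφ
    simp only [List.mem_append, List.mem_flatMap, List.mem_map] at hφ
    rcases hφ with ((⟨i, _, j, _, rfl⟩ | ⟨i, _, rfl⟩) | ⟨i, _, rfl⟩) | ⟨lit, _, rfl⟩
    · exact conj1_isQF C r i j
    · exact conj2'_isQF C r _ _
    · exact conj3'_isQF C r _ _
    · exact conj4_isQF C r lit
  · exact BoundedFormula.isQF_bot

theorem bigTheta_isQF : (bigTheta C).IsQF := by
  apply isQF_foldr_sup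
  intro φ hφ
  simp only [bigTheta, List.mem_map] at hφ
  obtain ⟨r, _, rfl⟩ := hφ
  exact theta_isQF C r


end Core2

section Helpers

variable {α : Type*} {n : ℕ}

theorem realize_top' {M : Type*} [L.Structure M] (v : α → M) (xs : Fin n → M) :
    (⊤ : L.BoundedFormula α n).Realize v xs :=
  (BoundedFormula.realize_top).mpr trivial

theorem relMap_congr {M : Type*} [L.Structure M] {m : ℕ} (R : L.Relations m)
    {xs ys : Fin m → M} (h : ∀ l, xs l = ys l) :
    Structure.RelMap R xs ↔ Structure.RelMap R ys := by
  rw [funext h]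

end Helpers

section Canon

variable {k n : ℕ} (C : List (Lit L (Fin k) (n + 1)))
variable {M : Type*} [L.Structure M] (v : Fin k → M) (xs : Fin n → M) (a : M)

/-- The value of the `i`-th subterm. -/
noncomputable def valF (i : Fin (NN C)) : M := (S C i).realize (Sum.elim v (Fin.snoc xs a))

/-- The canonical equality pattern induced by a valuation. -/
noncomputable def canonR (i : Fin (NN C)) : Fin (NN C) :=
  haveI : Nonempty (Fin (NN C)) := ⟨iy C⟩
  Function.invFun (valF C v xs a) (valF C v xs a i)

theorem valF_canonR (i : Fin (NN C)) : valF C v xs a (canonR C v xs a i) = valF C v xs a i := by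
  haveI : Nonempty (Fin (NN C)) := ⟨iy C⟩
  exact Function.invFun_eq ⟨i, rfl⟩

theorem canonR_same {i j : Fin (NN C)} (h : valF C v xs a i = valF C v xs a j) :
    canonR C v xs a i = canonR C v xs a j := by
  rw [canonR, canonR, h]

theorem canonR_back {i j : Fin (NN C)} (h : canonR C v xs a i = canonR C v xs a j) :
    valF C v xs a i = valF C v xs a j := by
  rw [← valF_canonR C v xs a i, h, valF_canonR]

theorem canonR_idem (i : Fin (NN C)) :
    canonR C v xs a (canonR C v xs a i) = canonR C v xs a i :=
  canonR_same C v xs a (valF_canonR C v xs a i)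


theorem valF_eq {i : Fin (NN C)} {t : L.Term (Fin k ⊕ Fin (n + 1))} (h : S C i = t) :
    valF C v xs a i = t.realize (Sum.elim v (Fin.snoc xs a)) := by rw [valF, h]

theorem GoodRep_realize_eq {r : Fin (NN C) → Fin (NN C)}
    (hback : ∀ i j, r i = r j → valF C v xs a i = valF C v xs a j)
    {i : Fin (NN C)} {u : L.Term (Fin k ⊕ Fin n)} (h : GoodRep C r i u) :
    u.realize (Sum.elim v xs) = valF C v xs a i := by
  induction h with
  | var i j z hji hS =>
      have h1 : (Term.var z : L.Term (Fin k ⊕ Fin n)).realize (Sum.elim v xs)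
          = valF C v xs a j := by
        rw [valF_eq C v xs a hS]
        simp only [Term.realize_var]
        exact (realize_ιv v xs a z).symm
      rw [h1]
      exact hback j i hji
  | fn i j f ts js us hji hS hjs _ ih =>
      have h1 : (Term.func f us).realize (Sum.elim v xs) = valF C v xs a j := by
        rw [valF_eq C v xs a hS]
        simp only [Term.realize_func]
        congr 1
        funext l
        rw [ih l, valF_eq C v xs a (hjs l)]
      rw [h1]
      exact hback j i hji


theorem canonR_valid (hcl : ClauseRealize v (Fin.snoc xs a) C) :
    Valid C (canonR C v xs a) := by
  refine ⟨canonR_idem C v xs a, ?_, ?_, ?_, ?_⟩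
  · intro i j h
    exact canonR_same C v xs a (by rw [valF, valF, h])
  · intro i j m f ts ts' hS hS' hargs
    apply canonR_same
    rw [valF_eq C v xs a hS, valF_eq C v xs a hS']
    simp only [Term.realize_func]
    congr 1
    funext l
    obtain ⟨j₁, hj₁⟩ := S_closed C i f ts hS l
    obtain ⟨j₂, hj₂⟩ := S_closed C j f ts' hS' l
    have := canonR_back C v xs a (hargs l j₁ j₂ hj₁ hj₂)
    rw [valF_eq C v xs a hj₁, valF_eq C v xs a hj₂] at this
    exact this
  · intro m R ts ts' b b' hmem₁ hmem₂ hargs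
    have h₁ := hcl _ hmem₁
    have h₂ := hcl _ hmem₂
    rw [LitRealize] at h₁ h₂
    have hts : ∀ l, (ts l).realize (Sum.elim v (Fin.snoc xs a))
        = (ts' l).realize (Sum.elim v (Fin.snoc xs a)) := by
      intro l
      obtain ⟨j₁, hj₁⟩ := litTerms_mem C hmem₁ (t := ts l)
        (by simp only [litTerms, List.mem_map]; exact ⟨l, List.mem_finRange l, rfl⟩)
      obtain ⟨j₂, hj₂⟩ := litTerms_mem C hmem₂ (t := ts' l)
        (by simp only [litTerms, List.mem_map]; exact ⟨l, List.mem_finRange l, rfl⟩)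
      have := canonR_back C v xs a (hargs l j₁ j₂ hj₁ hj₂)
      rw [valF_eq C v xs a hj₁, valF_eq C v xs a hj₂] at this
      exact this
    have hrel : (BoundedFormula.rel R ts).Realize v (Fin.snoc xs a)
        ↔ (BoundedFormula.rel R ts').Realize v (Fin.snoc xs a) := by
      have e1 : (BoundedFormula.rel R ts).Realize v (Fin.snoc xs a)
          ↔ Structure.RelMap R fun l => (ts l).realize (Sum.elim v (Fin.snoc xs a)) :=
        Iff.rfl
      have e2 : (BoundedFormula.rel R ts').Realize v (Fin.snoc xs a)
          ↔ Structure.RelMap R fun l => (ts' l).realize (Sum.elim v (Fin.snoc xs a)) :=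
        Iff.rfl
      rw [e1, e2]
      exact relMap_congr R hts
    rw [hrel, h₂] at h₁
    cases b <;> cases b' <;> simp_all
  · intro t u b j₁ j₂ hmemC hj₁ hj₂
    have h₁ := hcl _ hmemC
    rw [LitRealize] at h₁
    have e1 : (BoundedFormula.equal t u).Realize v (Fin.snoc xs a)
        ↔ (t.realize (Sum.elim v (Fin.snoc xs a)) = u.realize (Sum.elim v (Fin.snoc xs a))) :=
      Iff.rfl
    rw [e1] at h₁
    rw [← h₁]
    constructor
    · intro h
      have := canonR_back C v xs a h
      rw [valF_eq C v xs a hj₁, valF_eq C v xs a hj₂] at this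
      exact this
    · intro h
      exact canonR_same C v xs a
        (by rw [valF_eq C v xs a hj₁, valF_eq C v xs a hj₂]; exact h)

theorem forward (hcl : ClauseRealize v (Fin.snoc xs a) C) :
    (bigTheta C).Realize v xs := by
  classical
  set r := canonR C v xs a with hrdef
  have hback : ∀ i j, r i = r j → valF C v xs a i = valF C v xs a j :=
    fun i j h => canonR_back C v xs a h
  have hidem : ∀ i, r (r i) = r i := canonR_idem C v xs a
  have hGood : ∀ (c : Fin (NN C)) (hd : IsDet C r c),
      (U C r c hd).realize (Sum.elim v xs) = valF C v xs a c :=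
    fun c hd => GoodRep_realize_eq C v xs a hback (U_good C r c hd)
  have hvalid : Valid C r := canonR_valid C v xs a hcl
  have hconj : ∀ φ ∈ conjList C r, φ.Realize v xs := by
    intro φ hφ
    rw [conjList] at hφ
    simp only [List.mem_append, List.mem_flatMap, List.mem_map] at hφ
    rcases hφ with ((⟨i, _, j, _, rfl⟩ | ⟨i, _, rfl⟩) | ⟨i, _, rfl⟩) | ⟨lit, hlit, rfl⟩
    · rw [conj1]
      split
      case isFalse => exact realize_top' _ _
      case isTrue hi =>
        split
        case isFalse => exact realize_top' _ _
        case isTrue hj =>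
          split
          case isTrue => exact realize_top' _ _
          case isFalse hne =>
            rw [BoundedFormula.realize_not]
            intro hcon
            rw [BoundedFormula.realize_bdEqual] at hcon
            rw [hGood _ hi, hGood _ hj] at hcon
            have h2 := canonR_same C v xs a hcon
            rw [← hrdef] at h2
            rw [hidem, hidem] at h2
            exact hne h2
    · rw [conj2]
      cases hS : S C i with
      | var z =>
          cases z with
          | inl x =>
              rw [conj2']
              split
              case isFalse => exact realize_top' _ _
              case isTrue hd =>
                rw [BoundedFormula.realize_bdEqual]
                simp only [Term.realize_var]
                rw [hGood _ hd]
                have := hback _ _ (hidem i)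
                rw [this, valF_eq C v xs a hS]
                simp [Term.realize_var]
          | inr jj =>
              rw [conj2']
              split
              case isTrue => exact realize_top' _ _
              case isFalse hjj =>
                split
                case isFalse => exact realize_top' _ _
                case isTrue hd =>
                  rw [BoundedFormula.realize_bdEqual]
                  simp only [Term.realize_var]
                  rw [hGood _ hd]
                  have := hback _ _ (hidem i)
                  rw [this, valF_eq C v xs a hS]
                  simp only [Term.realize_var, Sum.elim_inr]
                  have hcast : jj = Fin.castSucc (jj.castPred hjj) := by
                    simp [Fin.castSucc_castPred]
                  conv_rhs => rw [hcast]
                  rw [Fin.snoc_castSucc]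
      | func f ts => rw [conj2']; exact realize_top' _ _
    · rw [conj3]
      cases hS : S C i with
      | var z => rw [conj3']; exact realize_top' _ _
      | func f ts =>
          rw [conj3']
          split
          case isFalse => exact realize_top' _ _
          case isTrue hd =>
            rw [BoundedFormula.realize_bdEqual]
            simp only [Term.realize_func]
            rw [hGood _ hd.2]
            have hvali := hback _ _ (hidem i)
            rw [hvali, valF_eq C v xs a hS]
            simp only [Term.realize_func]
            congr 1
            funext l
            rw [hGood _ (hd.1 l)]
            have h3 := hback _ _ (hidem (classIdx C (ts l)))
            rw [h3]
            rw [valF_eq C v xs a (classIdx_spec C (S_closed C i f ts hS l))]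
    · match lit with
      | (BoundedFormula.rel R ts, b) =>
          rw [conj4]
          split
          case isFalse => exact realize_top' _ _
          case isTrue hd =>
            have hts : ∀ l, (U C r (r (classIdx C (ts l))) (hd l)).realize (Sum.elim v xs)
                = (ts l).realize (Sum.elim v (Fin.snoc xs a)) := by
              intro l
              rw [hGood _ (hd l)]
              rw [hback _ _ (hidem (classIdx C (ts l)))]
              rw [valF_eq C v xs a (classIdx_spec C (litTerms_mem C hlit
                (by simp only [litTerms, List.mem_map]; exact ⟨l, List.mem_finRange l, rfl⟩)))]
            have hR := hcl _ hlit
            rw [LitRealize] at hR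
            have e1 : (BoundedFormula.rel R ts).Realize v (Fin.snoc xs a)
                ↔ Structure.RelMap R fun l => (ts l).realize (Sum.elim v (Fin.snoc xs a)) :=
              Iff.rfl
            rw [e1] at hR
            cases b with
            | true =>
                simp only [if_pos]
                have e2 : (Relations.boundedFormula R fun l =>
                    U C r (r (classIdx C (ts l))) (hd l)).Realize v xs
                    ↔ Structure.RelMap R fun l => (U C r (r (classIdx C (ts l))) (hd l)).realize
                      (Sum.elim v xs) := Iff.rfl
                rw [e2, relMap_congr R hts]
                exact hR.mpr rfl
            | false =>
                simp only [Bool.false_eq_true, if_false]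
                rw [BoundedFormula.realize_not]
                have e2 : (Relations.boundedFormula R fun l =>
                    U C r (r (classIdx C (ts l))) (hd l)).Realize v xs
                    ↔ Structure.RelMap R fun l => (U C r (r (classIdx C (ts l))) (hd l)).realize
                      (Sum.elim v xs) := Iff.rfl
                rw [e2, relMap_congr R hts]
                intro hcon
                have := hR.mp hcon
                simp at this
      | (BoundedFormula.falsum, b) => exact realize_top' _ _
      | (BoundedFormula.equal t₁ t₂, b) => exact realize_top' _ _
      | (BoundedFormula.imp f₁ f₂, b) => exact realize_top' _ _
      | (BoundedFormula.all f, b) => exact realize_top' _ _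
  rw [bigTheta, BoundedFormula.realize_foldr_sup]
  refine ⟨theta C r, List.mem_map.mpr ⟨r, Finset.mem_toList.mpr (Finset.mem_univ r), rfl⟩, ?_⟩
  rw [theta, if_pos hvalid, BoundedFormula.realize_foldr_inf]
  exact hconj

end Canon

section Reverse

variable {k n : ℕ} (C : List (Lit L (Fin k) (n + 1))) (r : Fin (NN C) → Fin (NN C))

/-- Enumeration data for the determined classes. -/
noncomputable def detData : Σ m : ℕ, ({c : Fin (NN C) // r c = c ∧ IsDet C r c} ≃ Fin m) :=
  ⟨(Finite.exists_equiv_fin {c : Fin (NN C) // r c = c ∧ IsDet C r c}).choose,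
    (Finite.exists_equiv_fin _).choose_spec.some⟩

/-- Enumeration data for the new classes. -/
noncomputable def newData : Σ m : ℕ, ({c : Fin (NN C) // r c = c ∧ ¬ IsDet C r c} ≃ Fin m) :=
  ⟨(Finite.exists_equiv_fin {c : Fin (NN C) // r c = c ∧ ¬ IsDet C r c}).choose,
    (Finite.exists_equiv_fin _).choose_spec.some⟩

noncomputable def mDet : ℕ := (detData C r).1
noncomputable def mNew : ℕ := (newData C r).1
noncomputable def eDet : {c : Fin (NN C) // r c = c ∧ IsDet C r c} ≃ Fin (mDet C r) :=
  (detData C r).2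
noncomputable def eNew : {c : Fin (NN C) // r c = c ∧ ¬ IsDet C r c} ≃ Fin (mNew C r) :=
  (newData C r).2

variable (hval : Valid C r)

open Classical in
/-- The position of the class of `i` among the parameters and witnesses. -/
noncomputable def pos (i : Fin (NN C)) : Fin (mDet C r) ⊕ Fin (mNew C r) :=
  if h : IsDet C r (r i) then
    Sum.inl (eDet C r ⟨r i, hval.1 i, h⟩)
  else
    Sum.inr (eNew C r ⟨r i, hval.1 i, h⟩)

theorem pos_congr {i j : Fin (NN C)} (h : r i = r j) :
    pos C r hval i = pos C r hval j := by
  have hd : IsDet C r (r i) ↔ IsDet C r (r j) := by rw [h]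
  by_cases hc : IsDet C r (r i)
  · rw [pos, pos, dif_pos hc, dif_pos (hd.mp hc)]
    exact congrArg Sum.inl (congrArg (eDet C r) (Subtype.ext h))
  · rw [pos, pos, dif_neg hc, dif_neg (fun hh => hc (hd.mpr hh))]
    exact congrArg Sum.inr (congrArg (eNew C r) (Subtype.ext h))

theorem pos_inj {i j : Fin (NN C)} (h : pos C r hval i = pos C r hval j) : r i = r j := by
  rw [pos, pos] at h
  by_cases hi : IsDet C r (r i) <;> by_cases hj : IsDet C r (r j)
  · rw [dif_pos hi, dif_pos hj] at h
    have := (eDet C r).injective (Sum.inl_injective h)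
    exact congrArg Subtype.val this
  · rw [dif_pos hi, dif_neg hj] at h
    exact absurd h (by simp)
  · rw [dif_neg hi, dif_pos hj] at h
    exact absurd h (by simp)
  · rw [dif_neg hi, dif_neg hj] at h
    have := (eNew C r).injective (Sum.inr_injective h)
    exact congrArg Subtype.val this

theorem pos_isRight {i : Fin (NN C)} (h : ¬ IsDet C r (r i)) :
    (pos C r hval i).isRight := by
  rw [pos, dif_neg h]
  rfl

/-- The parameters: the values of the determined classes. -/
noncomputable def param {M : Type*} [L.Structure M] (v : Fin k → M) (xs : Fin n → M)
    (p : Fin (mDet C r)) : M :=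
  (U C r ((eDet C r).symm p).1 ((eDet C r).symm p).2.2).realize (Sum.elim v xs)

open Classical in
/-- The flat formula coming from a relational literal. -/
noncomputable def flatOfLit :
    Lit L (Fin k) (n + 1) → Option (FlatFormula L (Fin (mDet C r) ⊕ Fin (mNew C r)))
  | (BoundedFormula.rel R ts, b) =>
      if ∃ l, ¬ IsDet C r (r (classIdx C (ts l))) then
        some (FlatFormula.rel R (fun l => pos C r hval (classIdx C (ts l))) b)
      else none
  | _ => none

open Classical in
/-- The flat formula recording a function application. -/
noncomputable def flatOfTerm (c : Fin (NN C)) :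
    L.Term (Fin k ⊕ Fin (n + 1)) → Option (FlatFormula L (Fin (mDet C r) ⊕ Fin (mNew C r)))
  | Term.func f ts =>
      if ∃ l, ¬ IsDet C r (r (classIdx C (ts l))) then
        some (FlatFormula.func f (fun l => pos C r hval (classIdx C (ts l)))
          (pos C r hval c))
      else none
  | Term.var _ => none

noncomputable def flatOfIdx (i : Fin (NN C)) :
    Option (FlatFormula L (Fin (mDet C r) ⊕ Fin (mNew C r))) :=
  flatOfTerm C r hval i (S C i)

/-- The extension diagram. -/
noncomputable def diag : Set (FlatFormula L (Fin (mDet C r) ⊕ Fin (mNew C r))) :=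
  {F | ∃ lit ∈ C, flatOfLit C r hval lit = some F} ∪ {F | ∃ i, flatOfIdx C r hval i = some F}

theorem flatOfLit_eq_some {lit : Lit L (Fin k) (n + 1)}
    {F : FlatFormula L (Fin (mDet C r) ⊕ Fin (mNew C r))}
    (h : flatOfLit C r hval lit = some F) :
    ∃ (m : ℕ) (R : L.Relations m) (ts : Fin m → L.Term (Fin k ⊕ Fin (n + 1))) (b : Bool),
      lit = (BoundedFormula.rel R ts, b) ∧ (∃ l, ¬ IsDet C r (r (classIdx C (ts l)))) ∧
      F = FlatFormula.rel R (fun l => pos C r hval (classIdx C (ts l))) b := by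
  match lit with
  | (BoundedFormula.rel R ts, b) =>
      rw [flatOfLit] at h
      split at h
      case isTrue hnew =>
        refine ⟨_, R, ts, b, rfl, hnew, ?_⟩
        exact (Option.some_injective _ h).symm
      case isFalse => exact absurd h (by simp)
  | (BoundedFormula.falsum, b) => exact absurd h (by simp [flatOfLit])
  | (BoundedFormula.equal t₁ t₂, b) => exact absurd h (by simp [flatOfLit])
  | (BoundedFormula.imp f₁ f₂, b) => exact absurd h (by simp [flatOfLit])
  | (BoundedFormula.all f, b) => exact absurd h (by simp [flatOfLit])

theorem flatOfTerm_eq_some {c : Fin (NN C)} {t : L.Term (Fin k ⊕ Fin (n + 1))}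
    {F : FlatFormula L (Fin (mDet C r) ⊕ Fin (mNew C r))}
    (h : flatOfTerm C r hval c t = some F) :
    ∃ (m : ℕ) (f : L.Functions m) (ts : Fin m → L.Term (Fin k ⊕ Fin (n + 1))),
      t = Term.func f ts ∧ (∃ l, ¬ IsDet C r (r (classIdx C (ts l)))) ∧
      F = FlatFormula.func f (fun l => pos C r hval (classIdx C (ts l))) (pos C r hval c) := by
  match t with
  | Term.func f ts =>
      rw [flatOfTerm] at h
      split at h
      case isTrue hnew =>
        exact ⟨_, f, ts, rfl, hnew, (Option.some_injective _ h).symm⟩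
      case isFalse => exact absurd h (by simp)
  | Term.var z => exact absurd h (by simp [flatOfTerm])

theorem diag_finite : (diag C r hval).Finite := by
  apply Set.Finite.union
  · apply Set.Finite.subset (List.finite_toSet (C.filterMap (flatOfLit C r hval)))
    intro F hF
    obtain ⟨lit, hlit, h⟩ := hF
    exact List.mem_filterMap.mpr ⟨lit, hlit, h⟩
  · apply Set.Finite.subset
      (List.finite_toSet ((List.finRange (NN C)).filterMap (flatOfIdx C r hval)))
    intro F hF
    obtain ⟨i, h⟩ := hF
    exact List.mem_filterMap.mpr ⟨i, List.mem_finRange i, h⟩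

theorem diag_mentionsRight : ∀ F ∈ diag C r hval, F.MentionsRight := by
  intro F hF
  rcases hF with ⟨lit, hlit, h⟩ | ⟨i, h⟩
  · obtain ⟨m, R, ts, b, rfl, ⟨l, hl⟩, rfl⟩ := flatOfLit_eq_some C r hval h
    exact ⟨l, pos_isRight C r hval hl⟩
  · obtain ⟨m, f, ts, hSi, ⟨l, hl⟩, rfl⟩ := flatOfTerm_eq_some C r hval h
    exact ⟨l, pos_isRight C r hval hl⟩


theorem diag_consistent : FlatConsistent (diag C r hval) := by
  constructor
  · rintro m R z ⟨h1, h2⟩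
    have get1 : ∀ (b : Bool), FlatFormula.rel R z b ∈ diag C r hval →
        ∃ ts : Fin m → L.Term (Fin k ⊕ Fin (n + 1)),
          (BoundedFormula.rel R ts, b) ∈ C ∧
          ∀ l, pos C r hval (classIdx C (ts l)) = z l := by
      intro b hb
      rcases hb with ⟨lit, hlit, he⟩ | ⟨i, he⟩
      · obtain ⟨m₁, R₁, ts₁, b₁, rfl, hnew, hF⟩ := flatOfLit_eq_some C r hval he
        injection hF with hm hR hz hb'
        subst hm
        obtain rfl := eq_of_heq hR
        obtain rfl := hb'
        refine ⟨ts₁, hlit, ?_⟩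
        intro l
        exact (congrFun (eq_of_heq hz) l).symm
      · obtain ⟨m₁, f₁, ts₁, hSi, hnew, hF⟩ := flatOfTerm_eq_some C r hval he
        exact absurd hF (by simp)
    obtain ⟨ts₁, hmem₁, hz₁⟩ := get1 true h1
    obtain ⟨ts₂, hmem₂, hz₂⟩ := get1 false h2
    have hb : (true : Bool) = false := by
      apply hval.2.2.2.1 R ts₁ ts₂ true false hmem₁ hmem₂
      intro l j₁ j₂ hj₁ hj₂
      have e1 : r (classIdx C (ts₁ l)) = r j₁ :=
        hval.2.1 _ _ (by rw [classIdx_spec C ⟨j₁, hj₁⟩, hj₁])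
      have e2 : r (classIdx C (ts₂ l)) = r j₂ :=
        hval.2.1 _ _ (by rw [classIdx_spec C ⟨j₂, hj₂⟩, hj₂])
      have e3 : pos C r hval (classIdx C (ts₁ l)) = pos C r hval (classIdx C (ts₂ l)) := by
        rw [hz₁ l, hz₂ l]
      have e4 := pos_inj C r hval e3
      rw [← e1, ← e2]
      exact e4
    simp at hb
  · rintro m f z z₁ z₂ h1 h2
    have get2 : ∀ (p : Fin (mDet C r) ⊕ Fin (mNew C r)), FlatFormula.func f z p ∈ diag C r hval →
        ∃ (i : Fin (NN C)) (ts : Fin m → L.Term (Fin k ⊕ Fin (n + 1))),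
          S C i = Term.func f ts ∧ pos C r hval i = p ∧
          ∀ l, pos C r hval (classIdx C (ts l)) = z l := by
      intro p hp
      rcases hp with ⟨lit, hlit, he⟩ | ⟨i, he⟩
      · obtain ⟨m₁, R₁, ts₁, b₁, rfl, hnew, hF⟩ := flatOfLit_eq_some C r hval he
        exact absurd hF (by simp)
      · obtain ⟨m₁, f₁, ts₁, hSi, hnew, hF⟩ := flatOfTerm_eq_some C r hval he
        injection hF with hm hf hz hp'
        subst hm
        obtain rfl := eq_of_heq hf
        exact ⟨i, ts₁, hSi, hp'.symm, fun l => (congrFun (eq_of_heq hz) l).symm⟩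
    obtain ⟨i₁, ts₁, hS₁, hp₁, hz₁⟩ := get2 z₁ h1
    obtain ⟨i₂, ts₂, hS₂, hp₂, hz₂⟩ := get2 z₂ h2
    have hr : r i₁ = r i₂ := by
      apply hval.2.2.1 i₁ i₂ f ts₁ ts₂ hS₁ hS₂
      intro l j₁ j₂ hj₁ hj₂
      have e1 : r (classIdx C (ts₁ l)) = r j₁ :=
        hval.2.1 _ _ (by rw [classIdx_spec C ⟨j₁, hj₁⟩, hj₁])
      have e2 : r (classIdx C (ts₂ l)) = r j₂ :=
        hval.2.1 _ _ (by rw [classIdx_spec C ⟨j₂, hj₂⟩, hj₂])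
      have e3 : pos C r hval (classIdx C (ts₁ l)) = pos C r hval (classIdx C (ts₂ l)) := by
        rw [hz₁ l, hz₂ l]
      have e4 := pos_inj C r hval e3
      rw [← e1, ← e2]
      exact e4
    rw [← hp₁, ← hp₂]
    exact pos_congr C r hval hr

theorem diag_ext : IsExtensionDiagram (diag C r hval) :=
  ⟨diag_finite C r hval, diag_consistent C r hval, diag_mentionsRight C r hval⟩

theorem conj1_mem (i j : Fin (NN C)) : conj1 C r i j ∈ conjList C r := by
  rw [conjList]
  exact List.mem_append.mpr (Or.inl (List.mem_append.mpr (Or.inl (List.mem_append.mpr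
    (Or.inl (List.mem_flatMap.mpr ⟨i, List.mem_finRange i,
      List.mem_map.mpr ⟨j, List.mem_finRange j, rfl⟩⟩))))))

theorem conj2_mem (i : Fin (NN C)) : conj2 C r i ∈ conjList C r := by
  rw [conjList]
  exact List.mem_append.mpr (Or.inl (List.mem_append.mpr (Or.inl (List.mem_append.mpr
    (Or.inr (List.mem_map.mpr ⟨i, List.mem_finRange i, rfl⟩))))))

theorem conj3_mem (i : Fin (NN C)) : conj3 C r i ∈ conjList C r := by
  rw [conjList]
  exact List.mem_append.mpr (Or.inl (List.mem_append.mpr (Or.inr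
    (List.mem_map.mpr ⟨i, List.mem_finRange i, rfl⟩))))

theorem conj4_mem {lit : Lit L (Fin k) (n + 1)} (h : lit ∈ C) :
    conj4 C r lit ∈ conjList C r := by
  rw [conjList]
  exact List.mem_append.mpr (Or.inr (List.mem_map.mpr ⟨lit, h, rfl⟩))

theorem U_realize_congr {M : Type*} [L.Structure M] (v : Fin k → M) (xs : Fin n → M)
    {c c' : Fin (NN C)} (h : c = c') (hd : IsDet C r c) (hd' : IsDet C r c') :
    (U C r c hd).realize (Sum.elim v xs) = (U C r c' hd').realize (Sum.elim v xs) := by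
  subst h
  rfl

/-- Values of the classes in the model obtained from the axiom. -/
noncomputable def cval {M : Type*} [L.Structure M] (v : Fin k → M) (xs : Fin n → M)
    (wb : Fin (mNew C r) → M) (i : Fin (NN C)) : M :=
  Sum.elim (param C r v xs) wb (pos C r hval i)

theorem cval_congr {M : Type*} [L.Structure M] (v : Fin k → M) (xs : Fin n → M)
    (wb : Fin (mNew C r) → M) {i j : Fin (NN C)} (h : r i = r j) :
    cval C r hval v xs wb i = cval C r hval v xs wb j := by
  rw [cval, cval, pos_congr C r hval h]

theorem cval_det {M : Type*} [L.Structure M] (v : Fin k → M) (xs : Fin n → M)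
    (wb : Fin (mNew C r) → M) (i : Fin (NN C)) (hd : IsDet C r (r i)) :
    cval C r hval v xs wb i = (U C r (r i) hd).realize (Sum.elim v xs) := by
  rw [cval, pos, dif_pos hd]
  simp only [Sum.elim_inl]
  rw [param]
  exact U_realize_congr C r v xs (by simp) _ _


theorem reverse {M : Type*} [L.Structure M] (hM : ModelsTEmpty L M)
    (hC : ∀ lit ∈ C, lit.1.IsAtomic)
    (v : Fin k → M) (xs : Fin n → M) (hθ : (theta C r).Realize v xs) :
    ∃ a : M, ClauseRealize v (Fin.snoc xs a) C := by
  classical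
  by_cases hval : Valid C r
  case neg =>
    rw [theta, if_neg hval] at hθ
    exact absurd hθ (by simp)
  case pos =>
  have hconj : ∀ φ ∈ conjList C r, φ.Realize v xs := by
    rw [theta, if_pos hval, BoundedFormula.realize_foldr_inf] at hθ
    exact hθ
  have hidem := hval.1
  -- consequences of the conjuncts
  have hconj1 : ∀ (i j : Fin (NN C)) (hi : IsDet C r (r i)) (hj : IsDet C r (r j)),
      r i ≠ r j → (U C r (r i) hi).realize (Sum.elim v xs)
        ≠ (U C r (r j) hj).realize (Sum.elim v xs) := by
    intro i j hi hj hne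
    have h := hconj _ (conj1_mem C r i j)
    rw [conj1, dif_pos hi, dif_pos hj, if_neg hne, BoundedFormula.realize_not,
      BoundedFormula.realize_bdEqual] at h
    exact h
  have hconj2 : ∀ (i : Fin (NN C)) (z : Fin k ⊕ Fin n) (hS : S C i = Term.var (ιv k n z))
      (hd : IsDet C r (r i)),
      Sum.elim v xs z = (U C r (r i) hd).realize (Sum.elim v xs) := by
    intro i z hS hd
    have h := hconj _ (conj2_mem C r i)
    rw [conj2, hS] at h
    cases z with
    | inl x =>
        rw [show ιv k n (Sum.inl x) = Sum.inl x from rfl] at h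
        rw [conj2', dif_pos hd, BoundedFormula.realize_bdEqual] at h
        simpa using h
    | inr j' =>
        rw [show ιv k n (Sum.inr j') = Sum.inr j'.castSucc from rfl] at h
        rw [conj2'] at h
        rw [dif_neg (Fin.ne_last_of_lt (Fin.castSucc_lt_last j')), dif_pos hd,
          BoundedFormula.realize_bdEqual] at h
        simpa [Fin.castPred_castSucc] using h
  have hconj3 : ∀ (i : Fin (NN C)) {m : ℕ} (f : L.Functions m)
      (ts : Fin m → L.Term (Fin k ⊕ Fin (n + 1)))
      (hS : S C i = Term.func f ts) (hd1 : ∀ l, IsDet C r (r (classIdx C (ts l))))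
      (hd2 : IsDet C r (r i)),
      (Structure.funMap f fun l =>
        (U C r (r (classIdx C (ts l))) (hd1 l)).realize (Sum.elim v xs))
        = (U C r (r i) hd2).realize (Sum.elim v xs) := by
    intro i m f ts hS hd1 hd2
    have h := hconj _ (conj3_mem C r i)
    rw [conj3, hS, conj3', dif_pos ⟨hd1, hd2⟩, BoundedFormula.realize_bdEqual] at h
    simpa [Term.realize_func] using h
  have hconj4 : ∀ {m : ℕ} (R : L.Relations m) (ts : Fin m → L.Term (Fin k ⊕ Fin (n + 1)))
      (bb : Bool), (BoundedFormula.rel R ts, bb) ∈ C →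
      ∀ (hd : ∀ l, IsDet C r (r (classIdx C (ts l)))),
      ((Structure.RelMap R fun l =>
        (U C r (r (classIdx C (ts l))) (hd l)).realize (Sum.elim v xs)) ↔ bb = true) := by
    intro m R ts bb hmem hd
    have h := hconj _ (conj4_mem C r hmem)
    rw [conj4, dif_pos hd] at h
    cases bb with
    | true =>
        rw [if_pos rfl] at h
        simpa using h
    | false =>
        rw [if_neg (by simp)] at h
        rw [BoundedFormula.realize_not] at h
        simpa using h
  -- parameters are injective
  have hparaminj : Function.Injective (param C r v xs) := by
    intro p p' hpp
    by_contra hne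
    have hcls : ((eDet C r).symm p).1 ≠ ((eDet C r).symm p').1 := by
      intro hcon
      exact hne (by
        have : (eDet C r).symm p = (eDet C r).symm p' := Subtype.ext hcon
        simpa using congrArg (eDet C r) this)
    have h1 : IsDet C r (r ((eDet C r).symm p).1) := by
      rw [((eDet C r).symm p).2.1]; exact ((eDet C r).symm p).2.2
    have h1' : IsDet C r (r ((eDet C r).symm p').1) := by
      rw [((eDet C r).symm p').2.1]; exact ((eDet C r).symm p').2.2
    have hne2 : r ((eDet C r).symm p).1 ≠ r ((eDet C r).symm p').1 := by
      rw [((eDet C r).symm p).2.1, ((eDet C r).symm p').2.1]; exact hcls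
    apply hconj1 _ _ h1 h1' hne2
    rw [U_realize_congr C r v xs ((eDet C r).symm p).2.1 h1 ((eDet C r).symm p).2.2,
      U_realize_congr C r v xs ((eDet C r).symm p').2.1 h1' ((eDet C r).symm p').2.2]
    exact hpp
  -- apply the axiom
  obtain ⟨wb, hbforms, hbinj⟩ := hM (mDet C r) (mNew C r) (diag C r hval)
    (diag_ext C r hval) (param C r v xs) hparaminj
  set a : M := cval C r hval v xs wb (iy C) with ha
  -- the main correspondence
  have main : ∀ (sz : ℕ) (i : Fin (NN C)), tsize (S C i) ≤ sz →
      (S C i).realize (Sum.elim v (Fin.snoc xs a)) = cval C r hval v xs wb i := by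
    intro sz
    induction sz using Nat.strong_induction_on with
    | _ sz IH =>
      intro i hsz
      cases hS : S C i with
      | var z =>
          cases z with
          | inl x =>
              have hd0 : IsDet C r i := IsDet.var i i (Sum.inl x) rfl (by rw [hS]; rfl)
              have hd : IsDet C r (r i) := IsDet.congr C r hd0 (hidem i).symm
              rw [cval_det C r hval v xs wb i hd, ← hconj2 i (Sum.inl x) (by rw [hS]; rfl) hd]
              rfl
          | inr jj =>
              by_cases hjj : jj = Fin.last n
              · subst hjj
                have hri : r (iy C) = r i := hval.2.1 (iy C) i (by rw [hS, S_iy]; rfl)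
                have e1 : (Term.var (Sum.inr (Fin.last n)) : L.Term (Fin k ⊕ Fin (n + 1))).realize
                    (Sum.elim v (Fin.snoc xs a)) = a := by simp [Fin.snoc_last]
                rw [e1, ha]
                exact cval_congr C r hval v xs wb hri
              · have hSS : S C i = Term.var (ιv k n (Sum.inr (jj.castPred hjj))) := by
                  rw [hS]
                  simp [ιv, Fin.castSucc_castPred]
                have hd0 : IsDet C r i := IsDet.var i i (Sum.inr (jj.castPred hjj)) rfl hSS
                have hd : IsDet C r (r i) := IsDet.congr C r hd0 (hidem i).symm
                rw [cval_det C r hval v xs wb i hd,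
                  ← hconj2 i (Sum.inr (jj.castPred hjj)) hSS hd]
                simp only [Term.realize_var, Sum.elim_inr]
                have hcast : jj = Fin.castSucc (jj.castPred hjj) := by
                  simp [Fin.castSucc_castPred]
                conv_lhs => rw [hcast]
                rw [Fin.snoc_castSucc]
      | func f ts =>
          have hargs : ∀ l, S C (classIdx C (ts l)) = ts l :=
            fun l => classIdx_spec C (S_closed C i f ts hS l)
          have hIH : ∀ l, (ts l).realize (Sum.elim v (Fin.snoc xs a))
              = cval C r hval v xs wb (classIdx C (ts l)) := by
            intro l
            have hlt : tsize (S C (classIdx C (ts l))) < sz := by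
              rw [hargs l]
              calc tsize (ts l) < tsize (Term.func f ts) := tsize_args f ts l
                _ = tsize (S C i) := by rw [hS]
                _ ≤ sz := hsz
            have h := IH _ hlt (classIdx C (ts l)) le_rfl
            rw [hargs l] at h
            exact h
          by_cases hd1 : ∀ l, IsDet C r (r (classIdx C (ts l)))
          · have hd0 : IsDet C r i := IsDet.fn i i f ts (fun l => classIdx C (ts l)) rfl hS hargs
              (fun l => IsDet.congr C r (hd1 l) (hidem _))
            have hd : IsDet C r (r i) := IsDet.congr C r hd0 (hidem i).symm
            rw [cval_det C r hval v xs wb i hd, ← hconj3 i f ts hS hd1 hd]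
            simp only [Term.realize_func]
            congr 1
            funext l
            rw [hIH l, cval_det C r hval v xs wb _ (hd1 l)]
          · push_neg at hd1
            obtain ⟨l₀, hl₀⟩ := hd1
            have hdiag : FlatFormula.func f (fun l => pos C r hval (classIdx C (ts l)))
                (pos C r hval i) ∈ diag C r hval := by
              right
              refine ⟨i, ?_⟩
              rw [flatOfIdx, hS, flatOfTerm, if_pos ⟨l₀, hl₀⟩]
            have hreal := hbforms _ hdiag
            rw [FlatFormula.Realize] at hreal
            simp only [Term.realize_func]
            rw [cval]
            rw [← hreal]
            congr 1
            funext l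
            rw [hIH l, cval]
  -- the pattern is realized and the clause holds
  have hcvinj : ∀ i j : Fin (NN C), cval C r hval v xs wb i = cval C r hval v xs wb j
      ↔ r i = r j := by
    intro i j
    constructor
    · intro h
      rw [cval, cval] at h
      exact pos_inj C r hval (hbinj h)
    · intro h
      exact cval_congr C r hval v xs wb h
  refine ⟨a, ?_⟩
  intro lit hlit
  obtain ⟨φ, bb⟩ := lit
  have hat : φ.IsAtomic := hC _ hlit
  cases hat with
  | equal t₁ t₂ =>
      have ht₁ : ∃ j, S C j = t₁ := litTerms_mem C hlit (by simp [litTerms, Term.bdEqual])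
      have ht₂ : ∃ j, S C j = t₂ := litTerms_mem C hlit (by simp [litTerms, Term.bdEqual])
      have hs₁ : S C (classIdx C t₁) = t₁ := classIdx_spec C ht₁
      have hs₂ : S C (classIdx C t₂) = t₂ := classIdx_spec C ht₂
      have hv₁ : t₁.realize (Sum.elim v (Fin.snoc xs a))
          = cval C r hval v xs wb (classIdx C t₁) := by
        conv_lhs => rw [← hs₁]
        exact main _ _ le_rfl
      have hv₂ : t₂.realize (Sum.elim v (Fin.snoc xs a))
          = cval C r hval v xs wb (classIdx C t₂) := by
        conv_lhs => rw [← hs₂]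
        exact main _ _ le_rfl
      rw [LitRealize]
      have e1 : (Term.bdEqual t₁ t₂).Realize v (Fin.snoc xs a)
          ↔ t₁.realize (Sum.elim v (Fin.snoc xs a)) = t₂.realize (Sum.elim v (Fin.snoc xs a)) :=
        BoundedFormula.realize_bdEqual t₁ t₂
      rw [show ((Term.bdEqual t₁ t₂, bb) : Lit L (Fin k) (n + 1)).1 = Term.bdEqual t₁ t₂ from rfl]
      rw [e1, hv₁, hv₂, hcvinj]
      exact hval.2.2.2.2 t₁ t₂ bb _ _ hlit hs₁ hs₂
  | rel R ts =>
      have hts : ∀ l, ∃ j, S C j = ts l := fun l => litTerms_mem C hlit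
        (by simp only [litTerms, Relations.boundedFormula, List.mem_map]
            exact ⟨l, List.mem_finRange l, rfl⟩)
      have hss : ∀ l, S C (classIdx C (ts l)) = ts l := fun l => classIdx_spec C (hts l)
      have hv : ∀ l, (ts l).realize (Sum.elim v (Fin.snoc xs a))
          = cval C r hval v xs wb (classIdx C (ts l)) := by
        intro l
        conv_lhs => rw [← hss l]
        exact main _ _ le_rfl
      rw [LitRealize]
      have e1 : (Relations.boundedFormula R ts).Realize v (Fin.snoc xs a)
          ↔ Structure.RelMap R fun l => (ts l).realize (Sum.elim v (Fin.snoc xs a)) := Iff.rfl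
      rw [show ((Relations.boundedFormula R ts, bb) : Lit L (Fin k) (n + 1)).1
        = Relations.boundedFormula R ts from rfl]
      rw [e1]
      by_cases hd : ∀ l, IsDet C r (r (classIdx C (ts l)))
      · rw [relMap_congr R (fun l => by
          rw [hv l, cval_det C r hval v xs wb _ (hd l)])]
        exact hconj4 R ts bb hlit hd
      · push_neg at hd
        obtain ⟨l₀, hl₀⟩ := hd
        have hdiag : FlatFormula.rel R (fun l => pos C r hval (classIdx C (ts l))) bb
            ∈ diag C r hval := by
          left
          refine ⟨(Relations.boundedFormula R ts, bb), hlit, ?_⟩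
          rw [show (Relations.boundedFormula R ts : L.BoundedFormula (Fin k) (n+1))
            = BoundedFormula.rel R ts from rfl]
          rw [flatOfLit, if_pos ⟨l₀, hl₀⟩]
        have hreal := hbforms _ hdiag
        rw [FlatFormula.Realize] at hreal
        rw [relMap_congr R (fun l => by rw [hv l, cval])]
        exact hreal

end Reverse

section Assemble

variable {k n : ℕ}

theorem bigTheta_spec (C : List (Lit L (Fin k) (n + 1))) (hC : ∀ lit ∈ C, lit.1.IsAtomic)
    {M : Type*} [L.Structure M] (hM : ModelsTEmpty L M) (v : Fin k → M) (xs : Fin n → M) :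
    (∃ a : M, ClauseRealize v (Fin.snoc xs a) C) ↔ (bigTheta C).Realize v xs := by
  constructor
  · rintro ⟨a, hcl⟩
    exact forward C v xs a hcl
  · intro h
    rw [bigTheta, BoundedFormula.realize_foldr_sup] at h
    obtain ⟨φ, hφ, hreal⟩ := h
    simp only [List.mem_map] at hφ
    obtain ⟨r, _, rfl⟩ := hφ
    exact reverse C r hM hC v xs hreal

theorem exQF_elim (ψ : L.BoundedFormula (Fin k) (n + 1)) (hψ : ψ.IsQF) :
    ∃ θ : L.BoundedFormula (Fin k) n, θ.IsQF ∧
      ∀ (M : Type*) [L.Structure M], ModelsTEmpty L M →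
        ∀ (v : Fin k → M) (xs : Fin n → M),
        ((∃ a : M, ψ.Realize v (Fin.snoc xs a)) ↔ θ.Realize v xs) := by
  refine ⟨((dnfp ψ).1.map fun Cl => bigTheta Cl).foldr (· ⊔ ·) ⊥, ?_, ?_⟩
  · apply isQF_foldr_sup
    intro φ hφ
    simp only [List.mem_map] at hφ
    obtain ⟨Cl, _, rfl⟩ := hφ
    exact bigTheta_isQF Cl
  · intro M _ hM v xs
    rw [BoundedFormula.realize_foldr_sup]
    constructor
    · rintro ⟨a, ha⟩
      obtain ⟨Cl, hCl, hcl⟩ := ((dnfp_correct ψ hψ v (Fin.snoc xs a)).1).mp ha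
      refine ⟨bigTheta Cl, List.mem_map.mpr ⟨Cl, hCl, rfl⟩, ?_⟩
      exact (bigTheta_spec Cl (fun lit hlit => (dnfp_atomic ψ).1 Cl hCl lit hlit) hM v xs).mp
        ⟨a, hcl⟩
    · rintro ⟨φ, hφ, hreal⟩
      simp only [List.mem_map] at hφ
      obtain ⟨Cl, hCl, rfl⟩ := hφ
      obtain ⟨a, hcl⟩ := (bigTheta_spec Cl (fun lit hlit => (dnfp_atomic ψ).1 Cl hCl lit hlit)
        hM v xs).mpr hreal
      exact ⟨a, ((dnfp_correct ψ hψ v (Fin.snoc xs a)).1).mpr ⟨Cl, hCl, hcl⟩⟩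

theorem qe_main : ∀ {n : ℕ} (φ : L.BoundedFormula (Fin k) n),
    ∃ ψ : L.BoundedFormula (Fin k) n, ψ.IsQF ∧
      ∀ (M : Type*) [L.Structure M], ModelsTEmpty L M →
        ∀ (v : Fin k → M) (xs : Fin n → M), (φ.Realize v xs ↔ ψ.Realize v xs) := by
  intro n φ
  induction φ with
  | falsum => exact ⟨⊥, BoundedFormula.isQF_bot, fun M _ _ v xs => Iff.rfl⟩
  | equal t₁ t₂ =>
      exact ⟨BoundedFormula.equal t₁ t₂, (BoundedFormula.IsAtomic.equal t₁ t₂).isQF,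
        fun M _ _ v xs => Iff.rfl⟩
  | rel R ts =>
      exact ⟨BoundedFormula.rel R ts, (BoundedFormula.IsAtomic.rel R ts).isQF,
        fun M _ _ v xs => Iff.rfl⟩
  | imp f₁ f₂ ih₁ ih₂ =>
      obtain ⟨ψ₁, h₁, e₁⟩ := ih₁
      obtain ⟨ψ₂, h₂, e₂⟩ := ih₂
      refine ⟨ψ₁.imp ψ₂, h₁.imp h₂, ?_⟩
      intro M _ hM v xs
      rw [BoundedFormula.realize_imp, BoundedFormula.realize_imp,
        e₁ M hM v xs, e₂ M hM v xs]
  | all f ih =>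
      obtain ⟨ψ', h', e'⟩ := ih
      obtain ⟨θ, hθ, eθ⟩ := exQF_elim ψ'.not h'.not
      refine ⟨θ.not, hθ.not, ?_⟩
      intro M _ hM v xs
      rw [BoundedFormula.realize_all, BoundedFormula.realize_not, ← eθ M hM v xs]
      constructor
      · rintro h ⟨a, hcon⟩
        rw [BoundedFormula.realize_not] at hcon
        exact hcon ((e' M hM v (Fin.snoc xs a)).mp (h a))
      · intro h a
        by_contra hcon
        exact h ⟨a, BoundedFormula.realize_not.mpr
          (fun hr => hcon ((e' M hM v (Fin.snoc xs a)).mpr hr))⟩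

end Assemble

end TEQE

/-- `T^∅_L` has quantifier elimination: every `L`-formula is equivalent,
in every model of `T^∅_L`, to a quantifier-free `L`-formula in the same free variables. -/
theorem tEmpty_quantifier_elimination (L : FirstOrder.Language.{v, w}) (k : ℕ)
    (φ : L.Formula (Fin k)) :
    ∃ ψ : L.Formula (Fin k), BoundedFormula.IsQF ψ ∧
      ∀ (M : Type u) [L.Structure M], ModelsTEmpty L M →
        ∀ v : Fin k → M, φ.Realize v ↔ ψ.Realize v := by
  obtain ⟨ψ, hψ, e⟩ := TEQE.qe_main φ
  refine ⟨ψ, hψ, ?_⟩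
  intro M _ hM v
  exact e M hM v default
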